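/- For every positive integer m there exists a positive integer n such that for every coloring of n-dimensional Euclidean space with an arbitrary set of colors, there exists an isometric copy of the vertex set {0,1}^m of the m-dimensional unit hypercube in ℝⁿ that is either monochromatic or rainbow. -/

import Mathlib

/-- The vertex set `{0,1}^m` of the `m`-dimensional unit hypercube. -/
def unitCubeVertices (m : ℕ) : Set (EuclideanSpace ℝ (Fin m)) :=
  {x | ∀ i, x i = 0 ∨ x i = 1}

open Finset

variable {κ : Type} [Fintype κ]

/-- Recursive bound for the prehomogeneous sequence construction.
`r` = number of colors, `k` = size of the sets `Y`. -/
def ramN (r k : ℕ) : ℕ → ℕ → ℕ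
  | 0, _ => 0
  | s+1, j => r ^ ((j+1).choose k) * ramN r k s (j+1) + 1

lemma ramN_succ (r k s j : ℕ) :
    ramN r k (s+1) j = r ^ ((j+1).choose k) * ramN r k s (j+1) + 1 := rfl

/-- Pigeonhole: some fiber is large. -/
lemma pigeon {β : Type} [Fintype β] [DecidableEq β] [Nonempty β] (S : Finset ℕ) (g : ℕ → β)
    (Nt : ℕ) (hS : Fintype.card β * Nt ≤ S.card) :
    ∃ b : β, Nt ≤ (S.filter (fun z => g z = b)).card := by
  rcases Nat.eq_zero_or_pos Nt with h0 | h0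
  · exact ⟨Classical.arbitrary β, by omega⟩
  by_contra h
  push_neg at h
  have h1 : S.card = ∑ b : β, (S.filter (fun z => g z = b)).card :=
    card_eq_sum_card_fiberwise (fun x _ => mem_univ (g x))
  have h2 : ∑ b : β, (S.filter (fun z => g z = b)).card ≤ ∑ _b : β, (Nt - 1) :=
    Finset.sum_le_sum (fun b _ => Nat.le_sub_one_of_lt (h b))
  simp only [Finset.sum_const, smul_eq_mul, Finset.card_univ] at h2
  have h3 : Fintype.card β * Nt ≤ Fintype.card β * (Nt - 1) :=
    hS.trans (h1.le.trans h2)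
  have hb : 0 < Fintype.card β := Fintype.card_pos
  have := Nat.le_of_mul_le_mul_left h3 hb
  omega

lemma ramRec [Nonempty κ] (k : ℕ) (c : Finset ℕ → κ) :
    ∀ (s : ℕ) (chosen S : Finset ℕ),
      ramN (Fintype.card κ) k s chosen.card ≤ S.card →
      (∀ y ∈ chosen, ∀ z ∈ S, y < z) →
      (∀ Y ⊆ chosen, Y.card = k → ∀ a ∈ S, ∀ b ∈ S,
        c (insert a Y) = c (insert b Y)) →
      ∃ E, E ⊆ S ∧ E.card = s ∧
        (∀ Y, Y ⊆ chosen ∪ E → Y.card = k → ∀ a ∈ E, ∀ b ∈ E,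
          (∀ y ∈ Y, y < a) → (∀ y ∈ Y, y < b) → c (insert a Y) = c (insert b Y)) := by
  classical
  intro s
  induction s with
  | zero =>
    intro chosen S _ _ _
    exact ⟨∅, empty_subset _, card_empty, fun Y _ _ a ha => absurd ha (notMem_empty a)⟩
  | succ s ih =>
    intro chosen S hcard horder hinv
    rw [ramN_succ] at hcard
    have hSne : S.Nonempty := card_pos.mp (by omega)
    set x := S.min' hSne with hxdef
    have hxS : x ∈ S := S.min'_mem hSne
    have hxnotchosen : x ∉ chosen := fun hx => lt_irrefl x (horder x hx x hxS)
    set chosen' := insert x chosen with hc'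
    have hc'card : chosen'.card = chosen.card + 1 := card_insert_of_notMem hxnotchosen
    set S' := S.erase x with hS'
    have hS'card : S.card - 1 ≤ S'.card := by
      rw [hS', card_erase_of_mem hxS]
    -- fiber type
    have : ∀ z ∈ S', x < z := fun z hz =>
      lt_of_le_of_ne (S.min'_le z (mem_of_mem_erase hz)) (Ne.symm (ne_of_mem_erase hz))
    have hcardβ : Fintype.card ((↥(chosen'.powersetCard k)) → κ)
        = Fintype.card κ ^ ((chosen.card + 1).choose k) := by
      rw [Fintype.card_fun, Fintype.card_coe, card_powersetCard, hc'card]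
    set g : ℕ → ((↥(chosen'.powersetCard k)) → κ) := fun z Y => c (insert z (↑Y)) with hg
    obtain ⟨fc, hfc⟩ : ∃ b : (↥(chosen'.powersetCard k)) → κ,
        ramN (Fintype.card κ) k s (chosen.card + 1) ≤
        (S'.filter (fun z => g z = b)).card := by
      apply pigeon
      rw [hcardβ]
      have : Fintype.card κ ^ ((chosen.card+1).choose k) *
          ramN (Fintype.card κ) k s (chosen.card+1) ≤ S.card - 1 := by omega
      exact le_trans this hS'card
    set F := S'.filter (fun z => g z = fc) with hF
    have hFS' : F ⊆ S' := filter_subset _ _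
    have hFS : F ⊆ S := hFS'.trans (erase_subset _ _)
    have hxF : ∀ z ∈ F, x < z := fun z hz => this z (hFS' hz)
    -- invariants for recursive call
    have horder' : ∀ y ∈ chosen', ∀ z ∈ F, y < z := by
      intro y hy z hz
      rcases mem_insert.mp hy with rfl | hy
      · exact hxF z hz
      · exact horder y hy z (hFS hz)
    have hinv' : ∀ Y ⊆ chosen', Y.card = k → ∀ a ∈ F, ∀ b ∈ F,
        c (insert a Y) = c (insert b Y) := by
      intro Y hY hYcard a ha b hb
      have hYm : Y ∈ chosen'.powersetCard k := mem_powersetCard.mpr ⟨hY, hYcard⟩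
      have hga : g a = fc := (mem_filter.mp ha).2
      have hgb : g b = fc := (mem_filter.mp hb).2
      have := congrFun hga ⟨Y, hYm⟩
      have h2 := congrFun hgb ⟨Y, hYm⟩
      simp only [hg] at this h2
      rw [this, h2]
    obtain ⟨E', hE'F, hE'card, hE'prop⟩ := ih chosen' F (by rw [hc'card]; exact hfc) horder' hinv'
    have hxE' : x ∉ E' := fun hx => lt_irrefl x (hxF x (hE'F hx))
    refine ⟨insert x E', ?_, ?_, ?_⟩
    · intro z hz
      rcases mem_insert.mp hz with rfl | hz
      · exact hxS
      · exact hFS (hE'F hz)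
    · rw [card_insert_of_notMem hxE', hE'card]
    · intro Y hY hYcard a ha b hb hYa hYb
      have hunion : chosen ∪ insert x E' = chosen' ∪ E' := by
        rw [hc']
        ext z
        simp only [mem_union, mem_insert]
        tauto
      -- helper: if all y ∈ Y are < x then Y ⊆ chosen
      have hYchosen : (∀ y ∈ Y, y < x) → Y ⊆ chosen := by
        intro hlt y hy
        rcases mem_union.mp (hY hy) with h | h
        · exact h
        · rcases mem_insert.mp h with rfl | h
          · exact absurd (hlt _ hy) (lt_irrefl _)
          · exact absurd (hlt _ hy) (not_lt.2 (le_of_lt (hxF _ (hE'F h))))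
      rcases mem_insert.mp ha with rfl | ha <;> rcases mem_insert.mp hb with rfl | hb
      · rfl
      · -- a = x (so a is named x now), b ∈ E'
        exact hinv Y (hYchosen hYa) hYcard _ hxS b (hFS (hE'F hb))
      · -- b = x, a ∈ E'
        exact hinv Y (hYchosen hYb) hYcard a (hFS (hE'F ha)) _ hxS
      · exact hE'prop Y (hunion ▸ hY) hYcard a ha b hb hYa hYb

/-- Finite hypergraph Ramsey theorem with arbitrary `Fintype` color set:
for each uniformity `k` and target size `t` there is `G` such that every coloring of
the `k`-element subsets of any set `S` of at least `G` naturals admits a `t`-element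
subset `T ⊆ S` all of whose `k`-subsets get the same color. -/
theorem finRamsey (κ : Type) [Fintype κ] (k t : ℕ) :
    ∃ G : ℕ, ∀ (c : Finset ℕ → κ) (S : Finset ℕ), G ≤ S.card →
      ∃ T, T ⊆ S ∧ T.card = t ∧
        ∀ A ⊆ T, ∀ B ⊆ T, A.card = k → B.card = k → c A = c B := by
  classical
  rcases isEmpty_or_nonempty κ with hκ | hκ
  · exact ⟨0, fun c S _ => (hκ.false (c ∅)).elim⟩
  induction k with
  | zero =>
    refine ⟨t, fun c S hS => ?_⟩
    obtain ⟨T, hTS, hT⟩ := exists_subset_card_eq hS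
    refine ⟨T, hTS, hT, fun A _ B _ hA hB => ?_⟩
    rw [card_eq_zero.mp hA, card_eq_zero.mp hB]
  | succ k ihk =>
    rcases Nat.eq_zero_or_pos k with rfl | hkpos
    · -- uniformity 1: direct pigeonhole
      refine ⟨Fintype.card κ * t, fun c S hS => ?_⟩
      obtain ⟨fc, hfc⟩ := pigeon S (fun z => c {z}) t hS
      obtain ⟨T, hTsub, hT⟩ := exists_subset_card_eq hfc
      refine ⟨T, hTsub.trans (filter_subset _ _), hT, fun A hA B hB hAc hBc => ?_⟩
      obtain ⟨a, rfl⟩ := card_eq_one.mp hAc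
      obtain ⟨b, rfl⟩ := card_eq_one.mp hBc
      have ha := (mem_filter.mp (hTsub (hA (mem_singleton_self a)))).2
      have hb := (mem_filter.mp (hTsub (hB (mem_singleton_self b)))).2
      rw [ha, hb]
    · obtain ⟨Gk, hGk⟩ := ihk
      refine ⟨ramN (Fintype.card κ) k (Gk + 1) 0, fun c S hS => ?_⟩
      obtain ⟨E, hES, hEcard, hEprop⟩ := ramRec k c (Gk + 1) ∅ S (by simpa using hS)
        (fun y hy => absurd hy (notMem_empty y))
        (fun Y hY hYcard => by
          rw [subset_empty.mp hY, card_empty] at hYcard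
          exact absurd hYcard.symm (by omega))
      have hEne : E.Nonempty := card_pos.mp (by omega)
      set xmax := E.max' hEne with hxmax
      have hxmaxE : xmax ∈ E := E.max'_mem hEne
      set E' := E.erase xmax with hE'
      have hE'card : E'.card = Gk := by
        rw [hE', card_erase_of_mem hxmaxE, hEcard]
        omega
      obtain ⟨T, hTE', hTcard, hThom⟩ := hGk (fun Y => c (insert xmax Y)) E' (le_of_eq hE'card.symm)
      have hTE : T ⊆ E := hTE'.trans (erase_subset _ _)
      refine ⟨T, hTE.trans hES, hTcard, ?_⟩
      have key : ∀ A, A ⊆ T → A.card = k + 1 →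
          ∃ Y, Y ⊆ T ∧ Y.card = k ∧ c A = c (insert xmax Y) := by
        intro A hA hAc
        have hAne : A.Nonempty := card_pos.mp (by omega)
        set a := A.max' hAne with hadef
        have haA : a ∈ A := A.max'_mem hAne
        set Y := A.erase a with hYdef
        have hYA : Y ⊆ A := erase_subset _ _
        have hYcard : Y.card = k := by
          rw [hYdef, card_erase_of_mem haA, hAc]
          omega
        have hins : insert a Y = A := insert_erase haA
        have hYlt_a : ∀ y ∈ Y, y < a := fun y hy =>
          lt_of_le_of_ne (A.le_max' y (hYA hy)) (ne_of_mem_erase hy)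
        have hYlt_max : ∀ y ∈ Y, y < xmax := by
          intro y hy
          have hyE' : y ∈ E' := hTE' (hA (hYA hy))
          exact lt_of_le_of_ne (E.le_max' y (mem_of_mem_erase hyE')) (ne_of_mem_erase hyE')
        have haE : a ∈ E := hTE (hA haA)
        have hYsub : Y ⊆ ∅ ∪ E := by
          intro y hy
          exact mem_union_right _ (hTE (hA (hYA hy)))
        have := hEprop Y hYsub hYcard a haE xmax hxmaxE hYlt_a hYlt_max
        rw [hins] at this
        exact ⟨Y, fun y hy => hA (hYA hy), hYcard, this⟩
      intro A hA B hB hAc hBc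
      obtain ⟨YA, hYAT, hYAc, hA2⟩ := key A hA hAc
      obtain ⟨YB, hYBT, hYBc, hB2⟩ := key B hB hBc
      rw [hA2, hB2]
      exact hThom YA hYAT YB hYBT hYAc hYBc
open Finset

/-- Pattern type: for each position, a pair of slots in a triple. -/
abbrev Pat (M : ℕ) := (Fin M → Fin 3 × Fin 3) → Bool

def pos3 {M : ℕ} (i : Fin M) (r : Fin 3) : Fin (3*M) :=
  ⟨3*i.val + r.val, by have := i.2; have := r.2; omega⟩

/-- The `M`-subset of `X` (of card `3M`) in positions prescribed by `τ`. -/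
def pick (M : ℕ) (X : Finset ℕ) (h : X.card = 3*M) (τ : Fin M → Fin 3) :
    Finset ℕ :=
  Finset.image (fun i => X.orderEmbOfFin h (pos3 i (τ i))) Finset.univ

open scoped Classical in
/-- The color pattern of a `3M`-subset `X` under the coloring `c`. -/
noncomputable def patOf {α : Type*} (M : ℕ) (c : Finset ℕ → α) (X : Finset ℕ) : Pat M :=
  fun σ => if h : X.card = 3*M then
    (if c (pick M X h (fun i => (σ i).1)) = c (pick M X h (fun i => (σ i).2))
      then true else false)
  else false

def widx {M : ℕ} (i : Fin M) (r : Fin 6) : Fin (6*M) :=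
  ⟨6*i.val + r.val, by have := i.2; have := r.2; omega⟩

def wmap {M : ℕ} (T : Finset ℕ) (hT : T.card = 6*M) (i : Fin M) (r : Fin 6) : ℕ :=
  T.orderEmbOfFin hT (widx i r)

lemma wmap_mem {M : ℕ} (T : Finset ℕ) (hT : T.card = 6*M) (i : Fin M) (r : Fin 6) :
    wmap T hT i r ∈ T :=
  T.orderEmbOfFin_mem hT _

lemma wmap_lt {M : ℕ} (T : Finset ℕ) (hT : T.card = 6*M) {i i' : Fin M} {r r' : Fin 6}
    (h : 6*i.val + r.val < 6*i'.val + r'.val) :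
    wmap T hT i r < wmap T hT i' r' :=
  (T.orderEmbOfFin hT).strictMono (show widx i r < widx i' r' from h)

lemma wmap_inj {M : ℕ} (T : Finset ℕ) (hT : T.card = 6*M) {i i' : Fin M} {r r' : Fin 6}
    (h : wmap T hT i r = wmap T hT i' r') : i = i' ∧ r = r' := by
  have := (T.orderEmbOfFin hT).injective h
  have hval : 6*i.val + r.val = 6*i'.val + r'.val := congrArg Fin.val this
  have h1 := i.2; have h2 := i'.2; have h3 := r.2; have h4 := r'.2
  constructor <;> apply Fin.ext <;> omega

/-- The `M`-set with one element in each window, selected by `h`. -/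
def Uset {M : ℕ} (T : Finset ℕ) (hT : T.card = 6*M) (h : Fin M → Fin 6) : Finset ℕ :=
  Finset.image (fun i => wmap T hT i (h i)) Finset.univ

def qI {M : ℕ} (q : Fin (3*M)) : Fin M := ⟨q.val/3, by have := q.2; omega⟩
def qR {M : ℕ} (q : Fin (3*M)) : Fin 3 := ⟨q.val%3, by omega⟩

def gmap {M : ℕ} (T : Finset ℕ) (hT : T.card = 6*M) (ρ : Fin M → Fin 3 → Fin 6)
    (q : Fin (3*M)) : ℕ :=
  wmap T hT (qI q) (ρ (qI q) (qR q))

/-- The `3M`-set consisting of a triple in each window, selected by `ρ`. -/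
def Zset {M : ℕ} (T : Finset ℕ) (hT : T.card = 6*M) (ρ : Fin M → Fin 3 → Fin 6) :
    Finset ℕ :=
  Finset.image (gmap T hT ρ) Finset.univ

lemma gmap_strictMono {M : ℕ} (T : Finset ℕ) (hT : T.card = 6*M)
    (ρ : Fin M → Fin 3 → Fin 6) (hρ : ∀ i, StrictMono (ρ i)) :
    StrictMono (gmap T hT ρ) := by
  intro q q' hlt
  apply wmap_lt
  have hq : q.val < q'.val := hlt
  rcases Nat.lt_or_ge (q.val/3) (q'.val/3) with h | h
  · have hb : (ρ (qI q) (qR q)).val < 6 := (ρ _ _).2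
    simp only [qI]
    omega
  · have heq : q.val/3 = q'.val/3 := by omega
    have hIeq : (qI q : Fin M) = qI q' := by
      apply Fin.ext; simp only [qI]; exact heq
    have hRlt : (qR q : Fin 3) < qR q' := by
      simp only [qR, Fin.lt_def]; omega
    rw [hIeq]
    have hvs : (ρ (qI q') (qR q)).val < (ρ (qI q') (qR q')).val := hρ (qI q') hRlt
    omega

lemma Zset_card {M : ℕ} (T : Finset ℕ) (hT : T.card = 6*M)
    (ρ : Fin M → Fin 3 → Fin 6) (hρ : ∀ i, StrictMono (ρ i)) :
    (Zset T hT ρ).card = 3*M := by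
  rw [Zset, Finset.card_image_of_injective _ (gmap_strictMono T hT ρ hρ).injective,
    card_univ, Fintype.card_fin]

lemma Zset_subset {M : ℕ} (T : Finset ℕ) (hT : T.card = 6*M)
    (ρ : Fin M → Fin 3 → Fin 6) : Zset T hT ρ ⊆ T := by
  intro z hz
  obtain ⟨q, _, rfl⟩ := Finset.mem_image.mp hz
  exact wmap_mem T hT _ _

lemma Zset_orderEmb {M : ℕ} (T : Finset ℕ) (hT : T.card = 6*M)
    (ρ : Fin M → Fin 3 → Fin 6) (hρ : ∀ i, StrictMono (ρ i)) :
    ∀ q, (Zset T hT ρ).orderEmbOfFin (Zset_card T hT ρ hρ) q = gmap T hT ρ q := by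
  intro q
  have := Finset.orderEmbOfFin_unique (f := gmap T hT ρ) (Zset_card T hT ρ hρ)
    (fun x => Finset.mem_image_of_mem _ (mem_univ x)) (gmap_strictMono T hT ρ hρ)
  exact (congrFun this q).symm

lemma pick_Zset {M : ℕ} (T : Finset ℕ) (hT : T.card = 6*M)
    (ρ : Fin M → Fin 3 → Fin 6) (hρ : ∀ i, StrictMono (ρ i)) (τ : Fin M → Fin 3) :
    pick M (Zset T hT ρ) (Zset_card T hT ρ hρ) τ
      = Uset T hT (fun i => ρ i (τ i)) := by
  rw [pick, Uset]
  apply Finset.image_congr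
  intro i _
  show (Zset T hT ρ).orderEmbOfFin (Zset_card T hT ρ hρ) (pos3 i (τ i))
      = wmap T hT i (ρ i (τ i))
  rw [Zset_orderEmb T hT ρ hρ]
  have h1 : (qI (pos3 i (τ i)) : Fin M) = i := by
    apply Fin.ext; simp only [qI, pos3]
    have := (τ i).2; omega
  have h2 : (qR (pos3 i (τ i)) : Fin 3) = τ i := by
    apply Fin.ext; simp only [qR, pos3]
    have := (τ i).2; omega
  rw [gmap, h1, h2]

/-! ### Statuses -/

def rho0 {M : ℕ} : Fin M → Fin 3 → Fin 6 := fun _ r => ⟨r.val, by have := r.2; omega⟩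

lemma rho0_mono {M : ℕ} : ∀ i, StrictMono (rho0 (M := M) i) := by
  intro i a b hab
  exact hab

/-- The status of a pattern `σ`, read off from the canonical triple system. -/
noncomputable def stS {α : Type*} {M : ℕ} (T : Finset ℕ) (hT : T.card = 6*M)
    (c : Finset ℕ → α) (σ : Fin M → Fin 3 × Fin 3) : Bool :=
  patOf M c (Zset T hT rho0) σ

lemma patOf_Zset {α : Type*} {M : ℕ} (T : Finset ℕ) (hT : T.card = 6*M)
    (c : Finset ℕ → α) (ρ : Fin M → Fin 3 → Fin 6) (hρ : ∀ i, StrictMono (ρ i))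
    (σ : Fin M → Fin 3 × Fin 3) :
    (patOf M c (Zset T hT ρ) σ = true) ↔
      (c (Uset T hT fun i => ρ i (σ i).1) = c (Uset T hT fun i => ρ i (σ i).2)) := by
  rw [patOf]
  rw [dif_pos (Zset_card T hT ρ hρ)]
  rw [pick_Zset T hT ρ hρ, pick_Zset T hT ρ hρ]
  split_ifs with h
  · simp [h]
  · simp [h]

/-- Homogeneity hypothesis: all `3M`-subsets of `T` have the same pattern. -/
def Homog {α : Type*} (M : ℕ) (T : Finset ℕ) (c : Finset ℕ → α) : Prop :=
  ∀ A ⊆ T, ∀ B ⊆ T, A.card = 3*M → B.card = 3*M → patOf M c A = patOf M c B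

lemma status_iff {α : Type*} {M : ℕ} (T : Finset ℕ) (hT : T.card = 6*M)
    (c : Finset ℕ → α) (hhom : Homog M T c)
    (ρ : Fin M → Fin 3 → Fin 6) (hρ : ∀ i, StrictMono (ρ i)) (σ : Fin M → Fin 3 × Fin 3) :
    (c (Uset T hT fun i => ρ i (σ i).1) = c (Uset T hT fun i => ρ i (σ i).2)) ↔
      stS T hT c σ = true := by
  have h := congrFun (hhom (Zset T hT ρ) (Zset_subset T hT ρ) (Zset T hT rho0)
    (Zset_subset T hT rho0) (Zset_card T hT ρ hρ) (Zset_card T hT rho0 rho0_mono)) σ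
  rw [stS, ← h]
  exact (patOf_Zset T hT c ρ hρ σ).symm

/-- Generic realization lemma. -/
lemma pair_status {α : Type*} {M : ℕ} (T : Finset ℕ) (hT : T.card = 6*M)
    (c : Finset ℕ → α) (hhom : Homog M T c)
    (h h' : Fin M → Fin 6) (σ : Fin M → Fin 3 × Fin 3)
    (ρ : Fin M → Fin 3 → Fin 6) (hρ : ∀ i, StrictMono (ρ i))
    (h1 : ∀ i, ρ i (σ i).1 = h i) (h2 : ∀ i, ρ i (σ i).2 = h' i) :
    (c (Uset T hT h) = c (Uset T hT h')) ↔ stS T hT c σ = true := by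
  have e1 : Uset T hT (fun i => ρ i (σ i).1) = Uset T hT h := by
    rw [funext h1]
  have e2 : Uset T hT (fun i => ρ i (σ i).2) = Uset T hT h' := by
    rw [funext h2]
  rw [← e1, ← e2]
  exact status_iff T hT c hhom ρ hρ σ

lemma stS_swap {α : Type*} {M : ℕ} (T : Finset ℕ) (hT : T.card = 6*M)
    (c : Finset ℕ → α) (hhom : Homog M T c) (σ : Fin M → Fin 3 × Fin 3) :
    stS T hT c (fun i => ((σ i).2, (σ i).1)) = stS T hT c σ := by
  have h1 := status_iff T hT c hhom rho0 rho0_mono σ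
  have h2 := status_iff T hT c hhom rho0 rho0_mono (fun i => ((σ i).2, (σ i).1))
  have key : (stS T hT c (fun i => ((σ i).2, (σ i).1)) = true) ↔ (stS T hT c σ = true) :=
    h2.symm.trans (eq_comm.trans h1)
  cases hb : stS T hT c σ <;> cases hb' : stS T hT c (fun i => ((σ i).2, (σ i).1)) <;>
    simp_all

/-! ### Triples -/

def trip (x y z : Fin 6) : Fin 3 → Fin 6 :=
  fun r => if r.val = 0 then x else if r.val = 1 then y else z

lemma trip_mono {x y z : Fin 6} (hxy : x < y) (hyz : y < z) : StrictMono (trip x y z) := by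
  intro a b hab
  have hab' : a.val < b.val := hab
  have ha := a.2
  have hxy' : x.val < y.val := hxy
  have hyz' : y.val < z.val := hyz
  have hb := b.2
  simp only [trip]
  split_ifs <;>
    first
      | exact hxy
      | exact hyz
      | exact hxy.trans hyz
      | (exfalso; omega)

lemma trip_zero (x y z : Fin 6) : trip x y z 0 = x := rfl
lemma trip_one (x y z : Fin 6) : trip x y z 1 = y := rfl

/-! ### The cube -/

def i3 : Fin 3 → Fin 6 := Fin.castLE (by omega)

open scoped Classical in
noncomputable def aFun {m M : ℕ} (P : Fin m → Fin M) (v : Fin m → Bool) : Fin M → Fin 3 :=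
  fun i => if ∃ j, v j = true ∧ P j = i then 1 else 0

lemma aFun_cases {m M : ℕ} (P : Fin m → Fin M) (v : Fin m → Bool) (i : Fin M) :
    aFun P v i = 0 ∨ aFun P v i = 1 := by
  rw [aFun]
  split_ifs <;> simp

lemma aFun_apply {m M : ℕ} (P : Fin m → Fin M) (hP : Function.Injective P)
    (v : Fin m → Bool) (j : Fin m) :
    aFun P v (P j) = if v j then 1 else 0 := by
  rw [aFun]
  by_cases h : v j
  · rw [if_pos ⟨j, h, rfl⟩, if_pos h]
  · rw [if_neg, if_neg h]
    rintro ⟨j', hj', hPj'⟩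
    exact h ((hP hPj') ▸ hj')

lemma aFun_nonrange {m M : ℕ} (P : Fin m → Fin M) (v : Fin m → Bool) (i : Fin M)
    (h : ∀ j, P j ≠ i) : aFun P v i = 0 := by
  rw [aFun, if_neg]
  rintro ⟨j, _, hj⟩
  exact h j hj

/-- The vertex set of the combinatorial cube at `v`. -/
noncomputable def Vset {m M : ℕ} (T : Finset ℕ) (hT : T.card = 6*M)
    (P : Fin m → Fin M) (v : Fin m → Bool) : Finset ℕ :=
  Uset T hT (fun i => i3 (aFun P v i))

lemma i3_lt_four (x : Fin 3) : i3 x < 4 := by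
  have := x.2
  simp only [i3, Fin.lt_def, Fin.coe_castLE]
  omega

lemma four_lt_five : (4 : Fin 6) < 5 := by decide
lemma zero_lt_one6 : (0 : Fin 6) < 1 := by decide
lemma one_lt_five6 : (1 : Fin 6) < 5 := by decide
lemma zero_lt_two6 : (0 : Fin 6) < 2 := by decide
lemma two_lt_five6 : (2 : Fin 6) < 5 := by decide
lemma one_lt_two6 : (1 : Fin 6) < 2 := by decide

lemma trip01_i3 (x : Fin 3) (hx : x = 0 ∨ x = 1) : trip 0 1 5 x = i3 x := by
  rcases hx with rfl | rfl <;> rfl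

open scoped Classical in
noncomputable def sigVW {m M : ℕ} (P : Fin m → Fin M) (v w : Fin m → Bool) :
    Fin M → Fin 3 × Fin 3 :=
  fun i => if aFun P v i = aFun P w i then (0, 0) else (aFun P v i, aFun P w i)

open scoped Classical in
noncomputable def rhoVW {m M : ℕ} (P : Fin m → Fin M) (v w : Fin m → Bool) :
    Fin M → Fin 3 → Fin 6 :=
  fun i => if aFun P v i = aFun P w i then trip (i3 (aFun P v i)) 4 5 else trip 0 1 5

lemma rhoVW_mono {m M : ℕ} (P : Fin m → Fin M) (v w : Fin m → Bool) :
    ∀ i, StrictMono (rhoVW P v w i) := by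
  intro i
  rw [rhoVW]
  split_ifs
  · exact trip_mono (i3_lt_four _) four_lt_five
  · exact trip_mono zero_lt_one6 one_lt_five6

lemma rhoVW_fst {m M : ℕ} (P : Fin m → Fin M) (v w : Fin m → Bool) (i : Fin M) :
    rhoVW P v w i (sigVW P v w i).1 = i3 (aFun P v i) := by
  rw [rhoVW, sigVW]
  split_ifs with h
  · rfl
  · exact trip01_i3 _ (aFun_cases P v i)

lemma rhoVW_snd {m M : ℕ} (P : Fin m → Fin M) (v w : Fin m → Bool) (i : Fin M) :
    rhoVW P v w i (sigVW P v w i).2 = i3 (aFun P w i) := by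
  rw [rhoVW, sigVW]
  split_ifs with h
  · rw [h]
    rfl
  · exact trip01_i3 _ (aFun_cases P w i)

lemma pairReal {α : Type*} {m M : ℕ} (T : Finset ℕ) (hT : T.card = 6*M)
    (c : Finset ℕ → α) (hhom : Homog M T c) (P : Fin m → Fin M) (v w : Fin m → Bool) :
    (c (Vset T hT P v) = c (Vset T hT P w)) ↔ stS T hT c (sigVW P v w) = true :=
  pair_status T hT c hhom _ _ (sigVW P v w) (rhoVW P v w) (rhoVW_mono P v w)
    (rhoVW_fst P v w) (rhoVW_snd P v w)

open scoped Classical in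
noncomputable def singleSig {M : ℕ} (i₀ : Fin M) : Fin M → Fin 3 × Fin 3 :=
  fun i => if i = i₀ then (0, 1) else (0, 0)

noncomputable def Dflag {α : Type*} {M : ℕ} (T : Finset ℕ) (hT : T.card = 6*M)
    (c : Finset ℕ → α) (i₀ : Fin M) : Bool :=
  stS T hT c (singleSig i₀)

lemma single_step {α : Type*} {m M : ℕ} (T : Finset ℕ) (hT : T.card = 6*M)
    (c : Finset ℕ → α) (hhom : Homog M T c) (P : Fin m → Fin M)
    (hP : Function.Injective P) (j₀ : Fin m)
    (hD : Dflag T hT c (P j₀) = true) (v v' : Fin m → Bool)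
    (hdiff : v j₀ ≠ v' j₀) (hsame : ∀ j, j ≠ j₀ → v j = v' j) :
    c (Vset T hT P v) = c (Vset T hT P v') := by
  have haeq : ∀ i, i ≠ P j₀ → aFun P v i = aFun P v' i := by
    intro i hi
    by_cases h : ∃ j, P j = i
    · obtain ⟨j, rfl⟩ := h
      have hj : j ≠ j₀ := fun hj => hi (by rw [hj])
      rw [aFun_apply P hP, aFun_apply P hP, hsame j hj]
    · push_neg at h
      rw [aFun_nonrange P v i h, aFun_nonrange P v' i h]
  apply (pairReal T hT c hhom P v v').mpr
  cases hv : v j₀ with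
  | false =>
    have hv' : v' j₀ = true := by
      cases hv'2 : v' j₀
      · exact absurd (hv.trans hv'2.symm) hdiff
      · rfl
    have hsig : sigVW P v v' = singleSig (P j₀) := by
      funext i
      rw [sigVW, singleSig]
      by_cases hi : i = P j₀
      · subst hi
        rw [aFun_apply P hP, aFun_apply P hP, hv, hv']
        norm_num
      · rw [if_pos (haeq i hi), if_neg hi]
    rw [hsig]
    exact hD
  | true =>
    have hv' : v' j₀ = false := by
      cases hv'2 : v' j₀
      · rfl
      · exact absurd (hv.trans hv'2.symm) hdiff
    have hsig : sigVW P v v' = fun i => ((singleSig (P j₀) i).2, (singleSig (P j₀) i).1) := by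
      funext i
      rw [sigVW, singleSig]
      by_cases hi : i = P j₀
      · subst hi
        rw [aFun_apply P hP, aFun_apply P hP, hv, hv']
        norm_num
      · rw [if_pos (haeq i hi), if_neg hi]
    rw [hsig, stS_swap T hT c hhom (singleSig (P j₀))]
    exact hD

lemma mono_case {α : Type*} {m M : ℕ} (T : Finset ℕ) (hT : T.card = 6*M)
    (c : Finset ℕ → α) (hhom : Homog M T c) (P : Fin m → Fin M)
    (hP : Function.Injective P) (hD : ∀ j, Dflag T hT c (P j) = true) :
    ∀ v w : Fin m → Bool, c (Vset T hT P v) = c (Vset T hT P w) := by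
  classical
  have H : ∀ (d : ℕ) (v w : Fin m → Bool),
      (Finset.univ.filter fun j => v j ≠ w j).card = d →
      c (Vset T hT P v) = c (Vset T hT P w) := by
    intro d
    induction d with
    | zero =>
      intro v w h0
      have : v = w := by
        funext j
        by_contra hj
        have : j ∈ Finset.univ.filter fun j => v j ≠ w j :=
          mem_filter.mpr ⟨mem_univ j, hj⟩
        rw [card_eq_zero.mp h0] at this
        exact absurd this (notMem_empty j)
      rw [this]
    | succ d ih =>
      intro v w hcard
      have hne : (Finset.univ.filter fun j => v j ≠ w j).Nonempty :=
        card_pos.mp (by omega)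
      obtain ⟨j₀, hj₀⟩ := hne
      have hj₀ne : v j₀ ≠ w j₀ := (mem_filter.mp hj₀).2
      set v' := Function.update v j₀ (w j₀) with hv'def
      have hdiff : v j₀ ≠ v' j₀ := by
        rw [hv'def, Function.update_self]
        exact hj₀ne
      have hsame : ∀ j, j ≠ j₀ → v j = v' j := by
        intro j hj
        rw [hv'def, Function.update_of_ne hj]
      have h1 : c (Vset T hT P v) = c (Vset T hT P v') :=
        single_step T hT c hhom P hP j₀ (hD j₀) v v' hdiff hsame
      have h2 : (Finset.univ.filter fun j => v' j ≠ w j)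
          = (Finset.univ.filter fun j => v j ≠ w j).erase j₀ := by
        ext j
        simp only [mem_filter, mem_erase, mem_univ, true_and]
        by_cases hj : j = j₀
        · subst hj
          rw [hv'def, Function.update_self]
          simp
        · rw [hv'def, Function.update_of_ne hj]
          simp [hj]
      have h3 : (Finset.univ.filter fun j => v' j ≠ w j).card = d := by
        rw [h2, card_erase_of_mem hj₀, hcard]
        omega
      exact h1.trans (ih v' w h3)
  intro v w
  exact H _ v w rfl

lemma rainbow_aux {α : Type*} {m M : ℕ} (T : Finset ℕ) (hT : T.card = 6*M)
    (c : Finset ℕ → α) (hhom : Homog M T c) (P : Fin m → Fin M)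
    (hP : Function.Injective P) (j₀ : Fin m)
    (hD : Dflag T hT c (P j₀) = false) (v w : Fin m → Bool)
    (hv : v j₀ = false) (hw : w j₀ = true) :
    c (Vset T hT P v) ≠ c (Vset T hT P w) := by
  classical
  intro heq
  have hst : stS T hT c (sigVW P v w) = true := (pairReal T hT c hhom P v w).mp heq
  have hav : aFun P v (P j₀) = 0 := by
    rw [aFun_apply P hP, hv]
    rfl
  have haw : aFun P w (P j₀) = 1 := by
    rw [aFun_apply P hP, hw]
    rfl
  have hane : aFun P v (P j₀) ≠ aFun P w (P j₀) := by
    rw [hav, haw]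
    decide
  have hsig0 : sigVW P v w (P j₀) = (0, 1) := by
    simp only [sigVW]
    rw [if_neg hane, hav, haw]
  have hsing0 : singleSig (P j₀) (P j₀) = ((0 : Fin 3), (1 : Fin 3)) := by
    simp [singleSig]
  have hsingOff : ∀ i : Fin M, i ≠ P j₀ → singleSig (P j₀) i = ((0 : Fin 3), (0 : Fin 3)) := by
    intro i hi
    simp only [singleSig]
    rw [if_neg hi]
  set h2fun : Fin M → Fin 6 := fun i => if i = P j₀ then 2 else i3 (aFun P w i) with h2def
  -- Realization A : (V v, U h2fun) has type sigVW v w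
  have hA : c (Vset T hT P v) = c (Uset T hT h2fun) := by
    have := pair_status T hT c hhom (fun i => i3 (aFun P v i)) h2fun (sigVW P v w)
      (fun i => if i = P j₀ then trip 0 2 5 else rhoVW P v w i)
      (by
        intro i
        split_ifs
        · exact trip_mono zero_lt_two6 two_lt_five6
        · exact rhoVW_mono P v w i)
      (by
        intro i
        rcases eq_or_ne i (P j₀) with rfl | hi
        · show (if (P j₀ : Fin M) = P j₀ then trip 0 2 5 else rhoVW P v w (P j₀))
              (sigVW P v w (P j₀)).1 = i3 (aFun P v (P j₀))
          rw [if_pos rfl, hsig0, hav]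
          rfl
        · show (if i = P j₀ then trip 0 2 5 else rhoVW P v w i)
              (sigVW P v w i).1 = i3 (aFun P v i)
          rw [if_neg hi]
          exact rhoVW_fst P v w i)
      (by
        intro i
        rcases eq_or_ne i (P j₀) with rfl | hi
        · show (if (P j₀ : Fin M) = P j₀ then trip 0 2 5 else rhoVW P v w (P j₀))
              (sigVW P v w (P j₀)).2
            = (if (P j₀ : Fin M) = P j₀ then (2 : Fin 6) else i3 (aFun P w (P j₀)))
          rw [if_pos rfl, if_pos rfl, hsig0]
          rfl
        · show (if i = P j₀ then trip 0 2 5 else rhoVW P v w i)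
              (sigVW P v w i).2
            = (if i = P j₀ then (2 : Fin 6) else i3 (aFun P w i))
          rw [if_neg hi, if_neg hi]
          exact rhoVW_snd P v w i)
    exact this.mpr hst
  -- Realization B : (V w, U h2fun) has type singleSig (P j₀)
  have hB : (c (Vset T hT P w) = c (Uset T hT h2fun)) ↔
      stS T hT c (singleSig (P j₀)) = true := by
    apply pair_status T hT c hhom (fun i => i3 (aFun P w i)) h2fun (singleSig (P j₀))
      (fun i => if i = P j₀ then trip 1 2 5 else trip (i3 (aFun P w i)) 4 5)
    · intro i
      try dsimp only
      split_ifs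
      · exact trip_mono one_lt_two6 two_lt_five6
      · exact trip_mono (i3_lt_four _) four_lt_five
    · intro i
      rcases eq_or_ne i (P j₀) with rfl | hi
      · show (if (P j₀ : Fin M) = P j₀ then trip 1 2 5 else trip (i3 (aFun P w (P j₀))) 4 5)
            (singleSig (P j₀) (P j₀)).1 = i3 (aFun P w (P j₀))
        rw [if_pos rfl, hsing0, haw]
        rfl
      · show (if i = P j₀ then trip 1 2 5 else trip (i3 (aFun P w i)) 4 5)
            (singleSig (P j₀) i).1 = i3 (aFun P w i)
        rw [if_neg hi, hsingOff i hi]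
        rfl
    · intro i
      rcases eq_or_ne i (P j₀) with rfl | hi
      · show (if (P j₀ : Fin M) = P j₀ then trip 1 2 5 else trip (i3 (aFun P w (P j₀))) 4 5)
            (singleSig (P j₀) (P j₀)).2
          = (if (P j₀ : Fin M) = P j₀ then (2 : Fin 6) else i3 (aFun P w (P j₀)))
        rw [if_pos rfl, if_pos rfl, hsing0]
        rfl
      · show (if i = P j₀ then trip 1 2 5 else trip (i3 (aFun P w i)) 4 5)
            (singleSig (P j₀) i).2
          = (if i = P j₀ then (2 : Fin 6) else i3 (aFun P w i))
        rw [if_neg hi, if_neg hi, hsingOff i hi]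
        rfl
  have hDtrue : stS T hT c (singleSig (P j₀)) = true := hB.mp (heq ▸ hA)
  rw [Dflag, hDtrue] at hD
  exact absurd hD (by decide)

lemma rainbow_case {α : Type*} {m M : ℕ} (T : Finset ℕ) (hT : T.card = 6*M)
    (c : Finset ℕ → α) (hhom : Homog M T c) (P : Fin m → Fin M)
    (hP : Function.Injective P) (j₀ : Fin m)
    (hD : Dflag T hT c (P j₀) = false) (v w : Fin m → Bool) (hvw : v j₀ ≠ w j₀) :
    c (Vset T hT P v) ≠ c (Vset T hT P w) := by
  cases hv : v j₀ with
  | false =>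
    have hw : w j₀ = true := by
      cases hw2 : w j₀
      · exact absurd (hv.trans hw2.symm) hvw
      · rfl
    exact rainbow_aux T hT c hhom P hP j₀ hD v w hv hw
  | true =>
    have hw : w j₀ = false := by
      cases hw2 : w j₀
      · rfl
      · exact absurd (hv.trans hw2.symm) hvw
    intro heq
    exact rainbow_aux T hT c hhom P hP j₀ hD w v hw hv heq.symm

theorem cubeCore {α : Type*} {m M : ℕ} (hM : M = 2*m) (hm : 0 < m)
    (T : Finset ℕ) (hT : T.card = 6*M) (c : Finset ℕ → α) (hhom : Homog M T c) :
    ∃ P : Fin m → Fin M, Function.Injective P ∧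
      ((∀ v w : Fin m → Bool, c (Vset T hT P v) = c (Vset T hT P w)) ∨
        (∀ v w : Fin m → Bool, v ≠ w → c (Vset T hT P v) ≠ c (Vset T hT P w))) := by
  classical
  set I := Finset.univ.filter (fun i : Fin M => Dflag T hT c i = false) with hIdef
  by_cases hI : m ≤ I.card
  · obtain ⟨I', hI'sub, hI'card⟩ := exists_subset_card_eq hI
    refine ⟨fun j : Fin m => I'.orderEmbOfFin hI'card j,
      (I'.orderEmbOfFin hI'card).injective, Or.inr ?_⟩
    intro v w hvw
    obtain ⟨j₀, hj₀⟩ := Function.ne_iff.mp hvw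
    have hmem : I'.orderEmbOfFin hI'card j₀ ∈ I := hI'sub (I'.orderEmbOfFin_mem hI'card j₀)
    have hD : Dflag T hT c (I'.orderEmbOfFin hI'card j₀) = false := (mem_filter.mp hmem).2
    exact rainbow_case T hT c hhom _ (I'.orderEmbOfFin hI'card).injective j₀ hD v w hj₀
  · set J := Finset.univ.filter (fun i : Fin M => Dflag T hT c i = true) with hJdef
    have hJeq : J = Finset.univ.filter (fun i : Fin M => ¬ (Dflag T hT c i = false)) := by
      rw [hJdef]
      apply filter_congr
      intro i _
      simp
    have hJI : I.card + J.card = M := by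
      rw [hIdef, hJeq]
      rw [Finset.card_filter_add_card_filter_not
        (p := fun i : Fin M => Dflag T hT c i = false)]
      rw [card_univ, Fintype.card_fin]
    have hJm : m ≤ J.card := by omega
    obtain ⟨J', hJ'sub, hJ'card⟩ := exists_subset_card_eq hJm
    refine ⟨fun j : Fin m => J'.orderEmbOfFin hJ'card j,
      (J'.orderEmbOfFin hJ'card).injective, Or.inl ?_⟩
    apply mono_case T hT c hhom _ (J'.orderEmbOfFin hJ'card).injective
    intro j
    have hmem : J'.orderEmbOfFin hJ'card j ∈ J := hJ'sub (J'.orderEmbOfFin_mem hJ'card j)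
    exact (mem_filter.mp hmem).2

/-! ### Geometry -/

open RealInnerProductSpace

noncomputable def sq2inv : ℝ := (Real.sqrt 2)⁻¹

lemma sq2inv_sq : sq2inv * sq2inv = 1/2 := by
  rw [sq2inv, ← mul_inv]
  rw [← Real.sqrt_mul_self (by norm_num : (0:ℝ) ≤ 2)]
  norm_num

def idx {M G : ℕ} (hn : 0 < M*G) (j : Fin M) (y : ℕ) : Fin (M*G) :=
  ⟨(j.val*G + y) % (M*G), Nat.mod_lt _ hn⟩

lemma idx_val {M G : ℕ} (hn : 0 < M*G) (j : Fin M) (y : ℕ) (hy : y < G) :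
    (idx hn j y).val = j.val*G + y := by
  have h1 : (j.val+1)*G ≤ M*G := Nat.mul_le_mul_right G j.2
  have h2 : (j.val+1)*G = j.val*G + G := by ring
  exact Nat.mod_eq_of_lt (by omega)

lemma idx_bound {M G : ℕ} (j : Fin M) (y : ℕ) (hy : y < G) : j.val*G + y < M*G := by
  have h1 : (j.val+1)*G ≤ M*G := Nat.mul_le_mul_right G j.2
  have h2 : (j.val+1)*G = j.val*G + G := by ring
  omega

lemma idx_inj {M G : ℕ} (hn : 0 < M*G) {j j' : Fin M} {y y' : ℕ}
    (hy : y < G) (hy' : y' < G) (h : idx hn j y = idx hn j' y') : j = j' ∧ y = y' := by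
  have hb := idx_bound j y hy
  have hb' := idx_bound j' y' hy'
  have hval : j.val*G + y = j'.val*G + y' := by
    have hv := congrArg Fin.val h
    rw [idx, idx] at hv
    simpa [Nat.mod_eq_of_lt hb, Nat.mod_eq_of_lt hb'] using hv
  have hjj : j.val = j'.val := by
    rcases Nat.lt_trichotomy j.val j'.val with hlt | heq | hgt
    · have h3 : (j.val+1)*G ≤ j'.val*G := Nat.mul_le_mul_right G hlt
      have h4 : (j.val+1)*G = j.val*G + G := by ring
      omega
    · exact heq
    · have h3 : (j'.val+1)*G ≤ j.val*G := Nat.mul_le_mul_right G hgt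
      have h4 : (j'.val+1)*G = j'.val*G + G := by ring
      omega
  have hEq : j.val*G = j'.val*G := by rw [hjj]
  exact ⟨Fin.ext hjj, by omega⟩

open scoped Classical in
/-- The point of `ℝ^{M G}` associated with an `M`-element subset of `range G`. -/
noncomputable def pts {M G : ℕ} (hn : 0 < M*G) (S : Finset ℕ) :
    EuclideanSpace ℝ (Fin (M*G)) :=
  if h : S.card = M ∧ S ⊆ Finset.range G then
    ∑ j : Fin M, sq2inv • EuclideanSpace.single (idx hn j (S.orderEmbOfFin h.1 j)) (1:ℝ)
  else 0

lemma Uset_strictMono {M : ℕ} (T : Finset ℕ) (hT : T.card = 6*M) (h : Fin M → Fin 6) :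
    StrictMono (fun i => wmap T hT i (h i)) := by
  intro i i' hlt
  apply wmap_lt
  have := (h i).2
  have h2 : i.val < i'.val := hlt
  omega

lemma Uset_card {M : ℕ} (T : Finset ℕ) (hT : T.card = 6*M) (h : Fin M → Fin 6) :
    (Uset T hT h).card = M := by
  rw [Uset, Finset.card_image_of_injective _ (Uset_strictMono T hT h).injective,
    card_univ, Fintype.card_fin]

lemma Uset_subset {M : ℕ} (T : Finset ℕ) (hT : T.card = 6*M) (h : Fin M → Fin 6) :
    Uset T hT h ⊆ T := by
  intro z hz
  obtain ⟨i, _, rfl⟩ := Finset.mem_image.mp hz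
  exact wmap_mem T hT _ _

lemma Uset_orderEmb {M : ℕ} (T : Finset ℕ) (hT : T.card = 6*M) (h : Fin M → Fin 6) :
    ∀ q, (Uset T hT h).orderEmbOfFin (Uset_card T hT h) q = wmap T hT q (h q) := by
  intro q
  have := Finset.orderEmbOfFin_unique (f := fun i => wmap T hT i (h i)) (Uset_card T hT h)
    (fun x => Finset.mem_image_of_mem _ (mem_univ x)) (Uset_strictMono T hT h)
  exact (congrFun this q).symm

lemma pts_Uset {M G : ℕ} (hn : 0 < M*G) (T : Finset ℕ) (hT : T.card = 6*M)
    (hTG : T ⊆ Finset.range G) (h : Fin M → Fin 6) :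
    pts hn (Uset T hT h)
      = ∑ j : Fin M, sq2inv • EuclideanSpace.single (idx hn j (wmap T hT j (h j))) (1:ℝ) := by
  rw [pts, dif_pos ⟨Uset_card T hT h, (Uset_subset T hT h).trans hTG⟩]
  exact Finset.sum_congr rfl (fun j _ => by rw [Uset_orderEmb T hT h j])

lemma inner_single_single {N : ℕ} (a b : Fin N) :
    ⟪EuclideanSpace.single a (1:ℝ), EuclideanSpace.single b (1:ℝ)⟫
      = if a = b then 1 else 0 := by
  rw [EuclideanSpace.inner_single_left]
  simp [EuclideanSpace.single_apply]

noncomputable def Fvec {M G : ℕ} (hn : 0 < M*G) (T : Finset ℕ) (hT : T.card = 6*M)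
    (i : Fin M) : EuclideanSpace ℝ (Fin (M*G)) :=
  sq2inv • (EuclideanSpace.single (idx hn i (wmap T hT i (i3 1))) (1:ℝ)
          - EuclideanSpace.single (idx hn i (wmap T hT i (i3 0))) (1:ℝ))

lemma wmap_lt_G {M G : ℕ} (T : Finset ℕ) (hT : T.card = 6*M)
    (hTG : T ⊆ Finset.range G) (i : Fin M) (r : Fin 6) : wmap T hT i r < G :=
  Finset.mem_range.mp (hTG (wmap_mem T hT i r))

lemma Fvec_inner {m M G : ℕ} (hn : 0 < M*G) (T : Finset ℕ) (hT : T.card = 6*M)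
    (hTG : T ⊆ Finset.range G) (P : Fin m → Fin M) (hP : Function.Injective P)
    (j j' : Fin m) :
    ⟪Fvec hn T hT (P j), Fvec hn T hT (P j')⟫ = if j = j' then 1 else 0 := by
  have hlt : ∀ (i : Fin M) (r r' : Fin 6), r ≠ r' →
      idx hn i (wmap T hT i r) ≠ idx hn i (wmap T hT i r') := by
    intro i r r' hrr h
    exact hrr ((wmap_inj T hT
      (idx_inj hn (wmap_lt_G T hT hTG _ _) (wmap_lt_G T hT hTG _ _) h).2).2)
  have hcross : ∀ (i i' : Fin M) (r r' : Fin 6), i ≠ i' →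
      idx hn i (wmap T hT i r) ≠ idx hn i' (wmap T hT i' r') := by
    intro i i' r r' hii h
    exact hii (idx_inj hn (wmap_lt_G T hT hTG _ _) (wmap_lt_G T hT hTG _ _) h).1
  rw [Fvec, Fvec, real_inner_smul_left, real_inner_smul_right, inner_sub_left,
    inner_sub_right, inner_sub_right, inner_single_single, inner_single_single,
    inner_single_single, inner_single_single]
  by_cases hjj : j = j'
  · subst hjj
    rw [if_neg (hlt (P j) (i3 1) (i3 0) (by decide)),
      if_neg (hlt (P j) (i3 0) (i3 1) (by decide))]
    simp only [eq_self_iff_true, if_true]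
    linear_combination (2:ℝ) * sq2inv_sq
  · have hPne : P j ≠ P j' := fun h => hjj (hP h)
    rw [if_neg hjj, if_neg (hcross _ _ _ _ hPne), if_neg (hcross _ _ _ _ hPne),
      if_neg (hcross _ _ _ _ hPne), if_neg (hcross _ _ _ _ hPne)]
    ring

lemma comb_inner {m M G : ℕ} (hn : 0 < M*G) (T : Finset ℕ) (hT : T.card = 6*M)
    (hTG : T ⊆ Finset.range G) (P : Fin m → Fin M) (hP : Function.Injective P)
    (c : Fin m → ℝ) :
    ⟪∑ j : Fin m, c j • Fvec hn T hT (P j), ∑ j : Fin m, c j • Fvec hn T hT (P j)⟫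
      = ∑ j : Fin m, (c j)^2 := by
  rw [sum_inner]
  apply Finset.sum_congr rfl
  intro j _
  rw [real_inner_smul_left, inner_sum]
  rw [Finset.sum_eq_single j]
  · rw [real_inner_smul_right, Fvec_inner hn T hT hTG P hP, if_pos rfl]
    ring
  · intro j' _ hj'
    rw [real_inner_smul_right, Fvec_inner hn T hT hTG P hP, if_neg (Ne.symm hj')]
    ring
  · intro h
    exact absurd (Finset.mem_univ j) h

lemma comb_norm {m M G : ℕ} (hn : 0 < M*G) (T : Finset ℕ) (hT : T.card = 6*M)
    (hTG : T ⊆ Finset.range G) (P : Fin m → Fin M) (hP : Function.Injective P)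
    (c : Fin m → ℝ) :
    ‖∑ j : Fin m, c j • Fvec hn T hT (P j)‖ = Real.sqrt (∑ j : Fin m, (c j)^2) := by
  rw [@norm_eq_sqrt_real_inner, comb_inner hn T hT hTG P hP]

noncomputable def fmap {m M G : ℕ} (hn : 0 < M*G) (T : Finset ℕ) (hT : T.card = 6*M)
    (P : Fin m → Fin M) : EuclideanSpace ℝ (Fin m) → EuclideanSpace ℝ (Fin (M*G)) :=
  fun y => pts hn (Vset T hT P (fun _ => false)) + ∑ j : Fin m, y j • Fvec hn T hT (P j)

lemma fmap_dist {m M G : ℕ} (hn : 0 < M*G) (T : Finset ℕ) (hT : T.card = 6*M)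
    (hTG : T ⊆ Finset.range G) (P : Fin m → Fin M) (hP : Function.Injective P)
    (x y : EuclideanSpace ℝ (Fin m)) :
    dist (fmap hn T hT P x) (fmap hn T hT P y) = dist x y := by
  rw [dist_eq_norm]
  have hsub : fmap hn T hT P x - fmap hn T hT P y
      = ∑ j : Fin m, (x j - y j) • Fvec hn T hT (P j) := by
    simp only [fmap]
    rw [add_sub_add_left_eq_sub, ← Finset.sum_sub_distrib]
    apply Finset.sum_congr rfl
    intro j _
    rw [sub_smul]
  rw [hsub, comb_norm hn T hT hTG P hP, EuclideanSpace.dist_eq]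
  congr 1
  apply Finset.sum_congr rfl
  intro i _
  rw [Real.dist_eq, sq_abs]

lemma aFun_false {m M : ℕ} (P : Fin m → Fin M) (i : Fin M) :
    aFun P (fun _ => false) i = 0 := by
  rw [aFun, if_neg]
  rintro ⟨j, hj, -⟩
  exact Bool.false_ne_true hj

lemma fmap_vtx {m M G : ℕ} (hn : 0 < M*G) (T : Finset ℕ) (hT : T.card = 6*M)
    (hTG : T ⊆ Finset.range G) (P : Fin m → Fin M) (hP : Function.Injective P)
    (v : Fin m → Bool) :
    fmap hn T hT P (WithLp.toLp 2 (fun j => if v j then (1:ℝ) else 0)) = pts hn (Vset T hT P v) := by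
  classical
  have hV : ∀ w : Fin m → Bool, pts hn (Vset T hT P w)
      = ∑ i : Fin M, sq2inv •
          EuclideanSpace.single (idx hn i (wmap T hT i (i3 (aFun P w i)))) (1:ℝ) := by
    intro w
    rw [Vset]
    exact pts_Uset hn T hT hTG _
  have h1 : ∑ j : Fin m, (if v j then (1:ℝ) else 0) • Fvec hn T hT (P j)
      = ∑ j ∈ Finset.univ.filter (fun j => v j = true), Fvec hn T hT (P j) := by
    rw [Finset.sum_filter]
    apply Finset.sum_congr rfl
    intro j _
    split_ifs <;> simp
  have hinj : ∀ x ∈ Finset.univ.filter (fun j => v j = true),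
      ∀ y ∈ Finset.univ.filter (fun j => v j = true), P x = P y → x = y :=
    fun x _ y _ h => hP h
  have h2 : ∑ j ∈ Finset.univ.filter (fun j => v j = true), Fvec hn T hT (P j)
      = ∑ i ∈ (Finset.univ.filter (fun j => v j = true)).image P, Fvec hn T hT i :=
    (Finset.sum_image hinj).symm
  set gfun : (Fin m → Bool) → Fin M → EuclideanSpace ℝ (Fin (M*G)) := fun w i =>
    sq2inv • EuclideanSpace.single (idx hn i (wmap T hT i (i3 (aFun P w i)))) (1:ℝ)
    with hgdef
  have hmem1 : ∀ i : Fin M, i ∈ (Finset.univ.filter (fun j => v j = true)).image P →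
      aFun P v i = 1 := by
    intro i hi
    obtain ⟨j, hj, rfl⟩ := Finset.mem_image.mp hi
    rw [aFun, if_pos ⟨j, (Finset.mem_filter.mp hj).2, rfl⟩]
  have hmem0 : ∀ i : Fin M, i ∉ (Finset.univ.filter (fun j => v j = true)).image P →
      aFun P v i = 0 := by
    intro i hi
    rw [aFun, if_neg]
    rintro ⟨j, hj, rfl⟩
    exact hi (Finset.mem_image.mpr ⟨j, Finset.mem_filter.mpr ⟨Finset.mem_univ j, hj⟩, rfl⟩)
  have h4 : ∑ i ∈ (Finset.univ.filter (fun j => v j = true)).image P, Fvec hn T hT i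
      = ∑ i : Fin M, (gfun v i - gfun (fun _ => false) i) := by
    rw [Finset.sum_congr rfl (g := fun i => gfun v i - gfun (fun _ => false) i)
      (fun i hi => ?_)]
    · exact Finset.sum_subset (Finset.subset_univ _) (fun i _ hni => by
        rw [hgdef]
        dsimp only
        rw [hmem0 i hni, aFun_false P i, sub_self])
    · rw [hgdef]
      dsimp only
      rw [hmem1 i hi, aFun_false P i, Fvec, smul_sub]
  rw [fmap]
  dsimp only
  rw [h1, h2, h4, hV, hV, Finset.sum_sub_distrib]
  abel

/-- For every positive integer `m` there exists `n` such that every coloring of `ℝⁿ`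
with an arbitrary set of colors contains an isometric copy of the vertex set `{0,1}^m`
of the unit hypercube that is either monochromatic or rainbow. -/
theorem cube_mono_or_rainbow (m : ℕ) (hm : 0 < m) :
    ∃ n : ℕ, 0 < n ∧
      ∀ (α : Type*) (χ : EuclideanSpace ℝ (Fin n) → α),
        ∃ f : EuclideanSpace ℝ (Fin m) → EuclideanSpace ℝ (Fin n),
          Set.InjOn f (unitCubeVertices m) ∧
          (∀ x ∈ unitCubeVertices m, ∀ y ∈ unitCubeVertices m,
            dist (f x) (f y) = dist x y) ∧
          ((∀ x ∈ unitCubeVertices m, ∀ y ∈ unitCubeVertices m, χ (f x) = χ (f y)) ∨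
            (∀ x ∈ unitCubeVertices m, ∀ y ∈ unitCubeVertices m,
              χ (f x) = χ (f y) → x = y)) := by
  classical
  set M := 2*m with hM
  obtain ⟨G, hG⟩ := finRamsey ((Fin M → Fin 3 × Fin 3) → Bool) (3*M) (6*M)
  have hGpos : 0 < G := by
    obtain ⟨T, hTsub, hTcard, -⟩ := hG (fun _ _ => true) (Finset.range G)
      (by rw [Finset.card_range])
    by_contra h
    have hG0 : G = 0 := by omega
    rw [hG0, Finset.range_zero, Finset.subset_empty] at hTsub
    rw [hTsub, Finset.card_empty] at hTcard
    omega
  have hn : 0 < M * G := Nat.mul_pos (by omega) hGpos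
  refine ⟨M * G, hn, ?_⟩
  intro α χ
  set c : Finset ℕ → α := fun S => χ (pts hn S) with hcdef
  obtain ⟨T, hTsub, hTcard, hThom⟩ := hG (patOf M c) (Finset.range G)
    (by rw [Finset.card_range])
  have hhom : Homog M T c := fun A hA B hB hA3 hB3 => hThom A hA B hB hA3 hB3
  obtain ⟨P, hPinj, hPcase⟩ := cubeCore hM hm T hTcard c hhom
  set f := fmap hn T hTcard P with hfdef
  have hdist : ∀ x y, dist (f x) (f y) = dist x y :=
    fmap_dist hn T hTcard hTsub P hPinj
  set bits : EuclideanSpace ℝ (Fin m) → (Fin m → Bool) :=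
    fun x j => if x j = 1 then true else false with hbits
  have hvtx : ∀ x ∈ unitCubeVertices m, (fun j => if bits x j then (1:ℝ) else 0) = x := by
    intro x hx
    funext j
    rcases hx j with h0 | h1
    · simp [hbits, h0]
    · simp [hbits, h1]
  have hfx : ∀ x ∈ unitCubeVertices m, f x = pts hn (Vset T hTcard P (bits x)) := by
    intro x hx
    have hv := fmap_vtx hn T hTcard hTsub P hPinj (bits x)
    rw [hvtx x hx] at hv
    exact hv
  have hχ : ∀ x ∈ unitCubeVertices m, χ (f x) = c (Vset T hTcard P (bits x)) := by
    intro x hx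
    rw [hfx x hx, hcdef]
  refine ⟨f, ?_, fun x _ y _ => hdist x y, ?_⟩
  · intro x _ y _ hxy
    have h0 : dist x y = 0 := by
      rw [← hdist x y, hxy, dist_self]
    exact dist_eq_zero.mp h0
  · rcases hPcase with hmono | hrain
    · left
      intro x hx y hy
      rw [hχ x hx, hχ y hy]
      exact hmono _ _
    · right
      intro x hx y hy hxy
      have hb : bits x = bits y := by
        by_contra hb
        exact hrain (bits x) (bits y) hb (by rw [← hχ x hx, ← hχ y hy]; exact hxy)
      have h2 : x.ofLp = y.ofLp := by rw [← hvtx x hx, ← hvtx y hy, hb]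
      exact congrArg (WithLp.toLp 2) h2
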